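/- Let A = (a_x)_{x∈X} and B = (b_x)_{x∈X} be measurements on a state space S, let λ ∈ (0,1], and let C = λA + (1−λ)B be their probabilistic mixture, i.e., C = (λ a_x + (1−λ) b_x)_{x∈X}. If C is α-intersubjective, then A is (1 − (1−α)/λ)-intersubjective. -/
import Mathlib


open Finset

/-- An effect on the state space `S`: an affine map taking values in `[0,1]` on `S`. -/
def IsEffect {V : Type*} [AddCommGroup V] [Module ℝ V] (S : Set V) (a : V →ᵃ[ℝ] ℝ) : Prop :=
  ∀ s ∈ S, 0 ≤ a s ∧ a s ≤ 1

/-- A finite-outcome measurement: a family of effects summing to the unit effect on `S`. -/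
def IsMeasurement {V : Type*} [AddCommGroup V] [Module ℝ V] (S : Set V) {X : Type*} [Fintype X]
    (A : X → (V →ᵃ[ℝ] ℝ)) : Prop :=
  (∀ x, IsEffect S (A x)) ∧ ∀ s ∈ S, ∑ x, A x s = 1

/-- A joint measurement of `A` and `B`: a measurement on `X × Y` whose marginals are `A`, `B`. -/
def IsJointMeasurement {V : Type*} [AddCommGroup V] [Module ℝ V] (S : Set V)
    {X Y : Type*} [Fintype X] [Fintype Y]
    (A : X → (V →ᵃ[ℝ] ℝ)) (B : Y → (V →ᵃ[ℝ] ℝ)) (C : X × Y → (V →ᵃ[ℝ] ℝ)) : Prop :=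
  IsMeasurement S C ∧ (∀ x, ∀ s ∈ S, ∑ y, C (x, y) s = A x s) ∧
    (∀ y, ∀ s ∈ S, ∑ x, C (x, y) s = B y s)

/-- `A` is `α`-intersubjective: every joint measurement of `A` with itself has diagonal
weight at least `α · 1_S`. -/
def Intersubjective {V : Type*} [AddCommGroup V] [Module ℝ V] (S : Set V) {X : Type*} [Fintype X]
    (α : ℝ) (A : X → (V →ᵃ[ℝ] ℝ)) : Prop :=
  ∀ C : X × X → (V →ᵃ[ℝ] ℝ), IsJointMeasurement S A A C → ∀ s ∈ S, α ≤ ∑ x, C (x, x) s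

/-- `A` is `α`-sharp: for distinct outcomes `x ≠ x'`, any effect below both `A x` and `A x'`
is below `(1 - α) · 1_S`. -/
def SharpMeasurement {V : Type*} [AddCommGroup V] [Module ℝ V] (S : Set V) {X : Type*} [Fintype X]
    (α : ℝ) (A : X → (V →ᵃ[ℝ] ℝ)) : Prop :=
  ∀ x x', x ≠ x' → ∀ b : V →ᵃ[ℝ] ℝ, IsEffect S b → (∀ s ∈ S, b s ≤ A x s) →
    (∀ s ∈ S, b s ≤ A x' s) → ∀ s ∈ S, b s ≤ 1 - α


/-- if the mixture `C = λ·A + (1-λ)·B` is `α`-intersubjective with `λ ∈ (0,1]`,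
then `A` is `(1 - (1-α)/λ)`-intersubjective. -/
theorem mixture_intersubjective {V : Type*} [NormedAddCommGroup V] [NormedSpace ℝ V]
    (S : Set V) (hSconv : Convex ℝ S) (hScomp : IsCompact S)
    {X : Type*} [Fintype X] (A B C : X → (V →ᵃ[ℝ] ℝ))
    (hA : IsMeasurement S A) (hB : IsMeasurement S B)
    (l : ℝ) (hl : l ∈ Set.Ioc (0 : ℝ) 1)
    (hmix : ∀ x, C x = l • A x + (1 - l) • B x)
    (α : ℝ) (hC : Intersubjective S α C) :
    Intersubjective S (1 - (1 - α) / l) A := by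
  classical
  obtain ⟨hl0, hl1⟩ := hl
  intro D hD s hs
  obtain ⟨⟨hDeff, hDsum⟩, hDm1, hDm2⟩ := hD
  set E : X × X → (V →ᵃ[ℝ] ℝ) :=
    fun p => l • D p + (1 - l) • (if p.1 = p.2 then B p.1 else 0) with hE
  have hEapp : ∀ p (t : V), E p t = l * D p t + (1 - l) * (if p.1 = p.2 then B p.1 t else 0) := by
    intro p t
    by_cases h : p.1 = p.2 <;>
      simp [hE, h, AffineMap.coe_add, AffineMap.coe_smul, Pi.add_apply, Pi.smul_apply,
        smul_eq_mul]
  have hjoint : IsJointMeasurement S C C E := by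
    refine ⟨⟨?_, ?_⟩, ?_, ?_⟩
    · intro p t ht
      have h1 := (hDeff p) t ht
      have h2 : 0 ≤ (if p.1 = p.2 then B p.1 t else 0) ∧
          (if p.1 = p.2 then B p.1 t else 0) ≤ 1 := by
        by_cases h : p.1 = p.2
        · simpa [h] using (hB.1 p.1) t ht
        · simp [h]
      rw [hEapp]
      constructor
      · nlinarith [h1.1, h2.1]
      · nlinarith [h1.2, h2.2]
    · intro t ht
      have hsum : ∑ p : X × X, (if p.1 = p.2 then B p.1 t else 0) = 1 := by
        rw [Fintype.sum_prod_type]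
        have : ∀ x : X, ∑ y : X, (if x = y then B x t else 0) = B x t := by
          intro x; simp
        simp only [this]
        exact hB.2 t ht
      simp only [hEapp]
      rw [Finset.sum_add_distrib, ← Finset.mul_sum, ← Finset.mul_sum, hDsum t ht, hsum]
      ring
    · intro x t ht
      have : ∑ y : X, (if x = y then B x t else 0) = B x t := by simp
      simp only [hEapp]
      rw [Finset.sum_add_distrib, ← Finset.mul_sum, ← Finset.mul_sum, hDm1 x t ht, this,
        hmix x]
      simp [AffineMap.coe_add, AffineMap.coe_smul, Pi.add_apply, Pi.smul_apply, smul_eq_mul]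
    · intro y t ht
      have : ∑ x : X, (if x = y then B x t else 0) = B y t := by simp
      simp only [hEapp]
      rw [Finset.sum_add_distrib, ← Finset.mul_sum, ← Finset.mul_sum, hDm2 y t ht, this,
        hmix y]
      simp [AffineMap.coe_add, AffineMap.coe_smul, Pi.add_apply, Pi.smul_apply, smul_eq_mul]
  have key := hC E hjoint s hs
  have hdiag : ∑ x, E (x, x) s = l * (∑ x, D (x, x) s) + (1 - l) * (∑ x, B x s) := by
    simp only [hEapp]
    rw [Finset.sum_add_distrib, ← Finset.mul_sum, ← Finset.mul_sum]
    simp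
  have hBsum := hB.2 s hs
  rw [hdiag, hBsum] at key
  have h2 : 1 - ∑ x, D (x, x) s ≤ (1 - α) / l := by
    rw [le_div_iff₀ hl0]; nlinarith
  linarith
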